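/- Let Σ be a finite alphabet and S,T ⊆ Σ^* languages of finite words. Then Ψ(S·T^ω) = Ψ(S·T^*) + I(T), where the right-hand side denotes {Ψ(y) + m : y ∈ S·T^*, m ∈ I(T)}. -/

import Mathlib

open scoped Classical

/-- A (nondeterministic) Büchi automaton over alphabet `A`, with a finite state set. -/
structure BuchiAutomaton (A : Type) : Type 1 where
  Q : Type
  fin : Fintype Q
  step : Q → A → Set Q
  init : Set Q
  accept : Set Q

attribute [instance] BuchiAutomaton.fin

/-- A run of the automaton on an infinite word. -/
def BuchiAutomaton.IsRun {A : Type} (M : BuchiAutomaton A) (w : ℕ → A) (ρ : ℕ → M.Q) : Prop :=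
  ρ 0 ∈ M.init ∧ ∀ i, ρ (i + 1) ∈ M.step (ρ i) (w i)

/-- The language of a Büchi automaton: words admitting a run visiting the accepting set
infinitely often. -/
def BuchiAutomaton.lang {A : Type} (M : BuchiAutomaton A) : Set (ℕ → A) :=
  {w | ∃ ρ, M.IsRun w ρ ∧ ∀ n, ∃ m, n ≤ m ∧ ρ m ∈ M.accept}

/-- A Büchi automaton is deterministic if it has a unique initial state and
every transition set is a singleton. -/
def BuchiAutomaton.Deterministic {A : Type} (M : BuchiAutomaton A) : Prop :=
  (∃ q, M.init = {q}) ∧ ∀ q a, ∃ p, M.step q a = {p}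

/-- Parikh image of an infinite word: number of occurrences of each letter (`⊤` if infinite). -/
noncomputable def parikhInf {A : Type} (w : ℕ → A) : A → ℕ∞ :=
  fun a => {i : ℕ | w i = a}.encard

/-- The jumping language of a Büchi automaton. -/
def JumpLang {A : Type} (M : BuchiAutomaton A) : Set (ℕ → A) :=
  {w | ∃ w', parikhInf w' = parikhInf w ∧ w' ∈ M.lang}

/-- Number of occurrences of letter `a` in the `i`-th window of size `k` of `w`. -/
noncomputable def winCount {A : Type} (w : ℕ → A) (k i : ℕ) (a : A) : ℕ :=
  {j : ℕ | k * i ≤ j ∧ j < k * i + k ∧ w j = a}.ncard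

/-- `w` and `w'` are `k`-window permutations of each other. -/
def KWinPerm {A : Type} (k : ℕ) (w w' : ℕ → A) : Prop :=
  ∀ i a, winCount w k i a = winCount w' k i a

/-- The `k`-window jumping language of a Büchi automaton. -/
def KWinLang {A : Type} (M : BuchiAutomaton A) (k : ℕ) : Set (ℕ → A) :=
  {w | ∃ w', KWinPerm k w' w ∧ w' ∈ M.lang}

/-- The `∃`-window jumping language of a Büchi automaton. -/
def EWinLang {A : Type} (M : BuchiAutomaton A) : Set (ℕ → A) :=
  {w | ∃ k, 1 ≤ k ∧ ∃ w', KWinPerm k w' w ∧ w' ∈ M.lang}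

/-- Linear subsets of `ℕ^A`. -/
def IsLinearSetPi {A : Type} (R : Set (A → ℕ)) : Prop :=
  ∃ (b : A → ℕ) (P : Finset (A → ℕ)),
    R = {v | ∃ c : (A → ℕ) → ℕ, v = b + ∑ p ∈ P, c p • p}

/-- Semilinear sets: finite unions of linear sets. -/
def IsSemilinearSetPi {A : Type} (R : Set (A → ℕ)) : Prop :=
  ∃ (n : ℕ) (f : Fin n → Set (A → ℕ)), (∀ i, IsLinearSetPi (f i)) ∧ R = ⋃ i, f i

/-- A mask: a vector over `{0,∞}` with at least one `∞` coordinate. -/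
def IsMask {A : Type} (m : A → ℕ∞) : Prop :=
  (∀ a, m a = 0 ∨ m a = ⊤) ∧ ∃ a, m a = ⊤

/-- Adding a mask to a vector of naturals. -/
def maskAdd {A : Type} (x : A → ℕ) (m : A → ℕ∞) : A → ℕ∞ :=
  fun a => (x a : ℕ∞) + m a

/-- Adding a mask to a set of vectors, `R + m`. -/
def maskAddSet {A : Type} (R : Set (A → ℕ)) (m : A → ℕ∞) : Set (A → ℕ∞) :=
  (fun x => maskAdd x m) '' R

/-- `𝕄^A`: extended-natural vectors with at least one `∞` coordinate. -/
def MVecs (A : Type) : Set (A → ℕ∞) := {v | ∃ a, v a = ⊤}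

/-- Masked semilinear set: a union `⋃_m (S_m + m)` over all masks `m`, with each `S_m`
semilinear. -/
def IsMaskedSemilinear {A : Type} (S : Set (A → ℕ∞)) : Prop :=
  ∃ F : (A → ℕ∞) → Set (A → ℕ),
    (∀ m, IsMask m → IsSemilinearSetPi (F m)) ∧
    S = ⋃ m ∈ {m' : A → ℕ∞ | IsMask m'}, maskAddSet (F m) m

/-- `R` is `m`-oblivious: membership only depends on the `m`-equivalence class. -/
def MOblivious {A : Type} (m : A → ℕ∞) (R : Set (A → ℕ)) : Prop :=
  ∀ u v : A → ℕ, maskAdd u m = maskAdd v m → (u ∈ R ↔ v ∈ R)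

/-- `E_m`: unit vectors at the `∞` coordinates of the mask `m`. -/
noncomputable def maskUnits {A : Type} [Fintype A] [DecidableEq A] (m : A → ℕ∞) :
    Finset (A → ℕ) :=
  (Finset.univ.filter (fun a => m a = ⊤)).image (fun a => Pi.single a 1)

/-- `R` is in canonical `m`-oblivious form. -/
def CanonicalOblivious {A : Type} [Fintype A] [DecidableEq A] (m : A → ℕ∞)
    (R : Set (A → ℕ)) : Prop :=
  ∃ (n : ℕ) (b : Fin n → (A → ℕ)) (P : Fin n → Finset (A → ℕ)),
    (∀ i a, m a = ⊤ → b i a = 0) ∧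
    (∀ i p, p ∈ P i → ∀ a, m a = ⊤ → p a = 0) ∧
    R = ⋃ i, {v | ∃ c : (A → ℕ) → ℕ, v = b i + ∑ p ∈ (P i ∪ maskUnits m), c p • p}

/-- The finite prefix `x · y₀ · y₁ ⋯ y_{j-1}` of the infinite concatenation. -/
def catPrefix {A : Type} (x : List A) (y : ℕ → List A) : ℕ → List A
  | 0 => x
  | j + 1 => catPrefix x y j ++ y j

/-- Membership of an infinite word `w` in `S · T^ω`: `w = x · y₁ y₂ ⋯` with `x ∈ S` and all
`y_j ∈ T`. -/
def InOmegaCat {A : Type} (S T : Language A) (w : ℕ → A) : Prop :=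
  ∃ (x : List A) (y : ℕ → List A),
    x ∈ S ∧ (∀ j, y j ∈ T) ∧
    (∀ n : ℕ, ∃ j, n < (catPrefix x y j).length) ∧
    (∀ j i (h : i < (catPrefix x y j).length), (catPrefix x y j).get ⟨i, h⟩ = w i)

/-- Parikh image of a finite word. -/
def parikhFin {A : Type} [DecidableEq A] (x : List A) : A → ℕ :=
  fun a => x.count a

/-- The mask `m_Γ` associated with a set of letters `Γ`. -/
noncomputable def maskOf {A : Type} (Γ : Set A) : A → ℕ∞ :=
  fun a => if a ∈ Γ then ⊤ else 0

/-- `I(T)`: the masks `m_Γ` for nonempty `Γ ⊆ Σ` such that every letter of `Γ` occurs in some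
word of `T ∩ Γ^*`. -/
def ITset {A : Type} (T : Language A) : Set (A → ℕ∞) :=
  {m | ∃ Γ : Set A, Γ.Nonempty ∧ m = maskOf Γ ∧
        ∀ a ∈ Γ, ∃ x ∈ T, (∀ b ∈ x, b ∈ Γ) ∧ a ∈ x}

section Aux

variable {A : Type}

lemma catPrefix_succ (x : List A) (y : ℕ → List A) (j : ℕ) :
    catPrefix x y (j+1) = catPrefix x y j ++ y j := rfl

lemma catPrefix_prefix (x : List A) (y : ℕ → List A) {j j' : ℕ} (h : j ≤ j') :
    catPrefix x y j <+: catPrefix x y j' := by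
  induction j', h using Nat.le_induction with
  | base => exact List.prefix_refl _
  | succ n hn ih => exact ih.trans (List.prefix_append _ _)

lemma encard_count [DecidableEq A] (w : ℕ → A) (a : A) :
    ∀ (l : List A), (∀ i (h : i < l.length), l[i] = w i) →
    {i | i < l.length ∧ w i = a}.encard = (l.count a : ℕ∞) := by
  intro l
  induction l using List.reverseRecOn with
  | nil => intro _; simp
  | append_singleton l b ih =>
    intro hw
    have hb : b = w l.length := by
      have := hw l.length (by simp)
      simpa using this
    have hl : ∀ i (h : i < l.length), l[i] = w i := by
      intro i h
      have := hw i (by simp only [List.length_append, List.length_singleton]; omega)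
      rwa [List.getElem_append_left] at this
    by_cases hba : w l.length = a
    · have hset : {i | i < (l ++ [b]).length ∧ w i = a}
          = insert l.length {i | i < l.length ∧ w i = a} := by
        ext i
        simp only [Set.mem_setOf_eq, Set.mem_insert_iff, List.length_append,
          List.length_singleton]
        constructor
        · rintro ⟨h1, h2⟩
          rcases Nat.lt_succ_iff_lt_or_eq.1 (show i < l.length + 1 by omega) with h | h
          · exact Or.inr ⟨h, h2⟩
          · exact Or.inl h
        · rintro (rfl | ⟨h1, h2⟩)
          · exact ⟨by omega, hba⟩
          · exact ⟨by omega, h2⟩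
      rw [hset, Set.encard_insert_of_notMem (by simp), ih hl]
      have hab : b = a := hb.trans hba
      have : (l ++ [b]).count a = l.count a + 1 := by
        simp [List.count_append, List.count_singleton', hab]
      rw [this]
      push_cast
      ring
    · have hset : {i | i < (l ++ [b]).length ∧ w i = a}
          = {i | i < l.length ∧ w i = a} := by
        ext i
        simp only [Set.mem_setOf_eq, List.length_append, List.length_singleton]
        constructor
        · rintro ⟨h1, h2⟩
          refine ⟨?_, h2⟩
          rcases Nat.lt_succ_iff_lt_or_eq.1 (show i < l.length + 1 by omega) with h | h
          · exact h
          · exact absurd (h ▸ h2) hba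
        · rintro ⟨h1, h2⟩; exact ⟨by omega, h2⟩
      rw [hset, ih hl]
      have hab : ¬ (b = a) := fun h => hba (by rw [← hb]; exact h)
      have : (l ++ [b]).count a = l.count a := by
        simp [List.count_append, List.count_singleton', hab]
      rw [this]
  
lemma cat_mem_mul {S T : Language A} {x : List A} {y : ℕ → List A}
    (hx : x ∈ S) (hy : ∀ j, y j ∈ T) (N : ℕ) :
    catPrefix x y N ∈ S * (KStar.kstar T) := by
  induction N with
  | zero =>
    exact Language.mem_mul.2 ⟨x, hx, [], Language.mem_kstar.2 ⟨[], by simp, by simp⟩,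
      by simp only [List.append_nil]; rfl⟩
  | succ n ih =>
    rcases Language.mem_mul.1 ih with ⟨u, hu, v, hv, huv⟩
    rcases Language.mem_kstar.1 hv with ⟨L, rfl, hL⟩
    refine Language.mem_mul.2 ⟨u, hu, (L ++ [y n]).flatten,
      Language.mem_kstar.2 ⟨L ++ [y n], rfl, ?_⟩, ?_⟩
    · intro z hz
      rcases List.mem_append.1 hz with h | h
      · exact hL z h
      · simp at h; exact h ▸ hy n
    · rw [catPrefix_succ, ← huv]
      simp

lemma exists_block {x : List A} {y : ℕ → List A} {w : ℕ → A}
    (hub : ∀ n, ∃ j, n < (catPrefix x y j).length)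
    (hget : ∀ j i (h : i < (catPrefix x y j).length), (catPrefix x y j).get ⟨i, h⟩ = w i)
    (N i : ℕ) (hN : (catPrefix x y N).length ≤ i) :
    ∃ j, N ≤ j ∧ (catPrefix x y j).length ≤ i ∧ w i ∈ y j := by
  have hex : ∃ j, i < (catPrefix x y j).length := hub i
  have hj0 : i < (catPrefix x y (Nat.find hex)).length := Nat.find_spec hex
  have hj0pos : Nat.find hex ≠ 0 := by
    intro h
    rw [h] at hj0
    have := ((catPrefix_prefix x y (Nat.zero_le N)).length_le)
    omega
  obtain ⟨j, hj⟩ := Nat.exists_eq_succ_of_ne_zero hj0pos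
  rw [hj] at hj0
  have hj0' : i < (catPrefix x y (j+1)).length := hj0
  have hle : (catPrefix x y j).length ≤ i := by
    by_contra h
    exact Nat.find_min hex (m := j) (by omega) (by omega)
  have hNj : N ≤ j := by
    by_contra h
    have : (catPrefix x y (j+1)).length ≤ (catPrefix x y N).length :=
      (catPrefix_prefix x y (by omega)).length_le
    omega
  refine ⟨j, hNj, hle, ?_⟩
  have hw := hget (j+1) i hj0'
  rw [List.get_eq_getElem] at hw
  have heq : (catPrefix x y (j+1))[i]'hj0'
      = (y j)[i - (catPrefix x y j).length]'(by
        have : (catPrefix x y (j+1)).length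
            = (catPrefix x y j).length + (y j).length := by
          rw [catPrefix_succ]; simp
        omega) := by
    exact List.getElem_append_right hle
  
  rw [heq] at hw
  rw [← hw]
  exact List.getElem_mem _

lemma exists_pos {x : List A} {y : ℕ → List A} {w : ℕ → A}
    (hget : ∀ j i (h : i < (catPrefix x y j).length), (catPrefix x y j).get ⟨i, h⟩ = w i)
    (j : ℕ) (a : A) (ha : a ∈ y j) :
    ∃ i, (catPrefix x y j).length ≤ i ∧ w i = a := by
  obtain ⟨⟨k, hk⟩, hk2⟩ := List.mem_iff_get.1 ha
  have hlen : (catPrefix x y (j+1)).length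
      = (catPrefix x y j).length + (y j).length := by
    rw [catPrefix_succ]; simp
  refine ⟨(catPrefix x y j).length + k, Nat.le_add_right _ _, ?_⟩
  have hlt : (catPrefix x y j).length + k < (catPrefix x y (j+1)).length := by omega
  rw [← hget (j+1) _ hlt]
  simp only [List.get_eq_getElem]
  calc (catPrefix x y (j+1))[(catPrefix x y j).length + k]'hlt
      = (y j)[(catPrefix x y j).length + k - (catPrefix x y j).length]'(by omega) :=
        List.getElem_append_right (by omega)
    _ = a := by
        have : (catPrefix x y j).length + k - (catPrefix x y j).length = k := by omega
        simp only [this]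
        simpa using hk2

lemma parikh_eq_count [DecidableEq A] {x : List A} {y : ℕ → List A} {w : ℕ → A}
    (hget : ∀ j i (h : i < (catPrefix x y j).length), (catPrefix x y j).get ⟨i, h⟩ = w i)
    (N : ℕ) (a : A)
    (hsub : ∀ i, w i = a → i < (catPrefix x y N).length) :
    parikhInf w a = ((catPrefix x y N).count a : ℕ∞) := by
  have hset : {i | w i = a} = {i | i < (catPrefix x y N).length ∧ w i = a} := by
    ext i
    simp only [Set.mem_setOf_eq]
    exact ⟨fun h => ⟨hsub i h, h⟩, fun h => h.2⟩
  show {i | w i = a}.encard = _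
  rw [hset]
  exact encard_count w a _ (fun i h => by rw [← hget N i h]; simp)

end Aux
/-- `Ψ(S·T^ω) = Ψ(S·T^*) + I(T)`. -/
theorem parikh_omega_cat (A : Type) [Fintype A] [DecidableEq A] (S T : Language A) :
    parikhInf '' {w : ℕ → A | InOmegaCat S T w} =
      {v | ∃ y ∈ S * (KStar.kstar T), ∃ m ∈ ITset T, v = maskAdd (parikhFin y) m} := by
  ext v
  constructor
  · rintro ⟨w, ⟨x, y, hx, hy, hub, hget⟩, rfl⟩
    set Γ : Set A := {a | ∀ N, ∃ j, N ≤ j ∧ a ∈ y j} with hΓdef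
    have hchoice : ∀ a : A, a ∉ Γ → ∃ N, ∀ j, N ≤ j → a ∉ y j := by
      intro a ha
      rw [hΓdef, Set.mem_setOf_eq] at ha
      push_neg at ha
      obtain ⟨N, hN⟩ := ha
      exact ⟨N, hN⟩
    let f : A → ℕ := fun a => if h : a ∈ Γ then 0 else Classical.choose (hchoice a h)
    set N : ℕ := Finset.univ.sup f with hNdef
    have hblock : ∀ j, N ≤ j → ∀ a ∈ y j, a ∈ Γ := by
      intro j hj a ha
      by_contra hc
      have hfa : f a ≤ N := Finset.le_sup (Finset.mem_univ a)
      have := Classical.choose_spec (hchoice a hc) j (by simp only [f, dif_neg hc] at hfa; omega)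
      exact this ha
    have hΓne : Γ.Nonempty := by
      by_contra hc
      rw [Set.not_nonempty_iff_eq_empty] at hc
      have hemp : ∀ j, N ≤ j → y j = [] := by
        intro j hj
        rcases List.eq_nil_or_concat (y j) with h | ⟨l, a, h⟩
        · exact h
        · exfalso
          have : a ∈ y j := by rw [h]; simp
          have := hblock j hj a this
          rw [hc] at this
          exact this
      have hbound : ∀ j, (catPrefix x y j).length ≤ (catPrefix x y N).length := by
        intro j
        rcases le_total j N with h | h
        · exact (catPrefix_prefix x y h).length_le
        · obtain ⟨k, rfl⟩ := Nat.exists_eq_add_of_le h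
          induction k with
          | zero => simp
          | succ n ih =>
            have he : y (N + n) = [] := hemp _ (by omega)
            have : catPrefix x y (N + (n+1)) = catPrefix x y (N + n) := by
              rw [show N + (n+1) = (N + n) + 1 from rfl, catPrefix_succ, he, List.append_nil]
            rw [this]
            exact ih (by omega)
      obtain ⟨j, hj⟩ := hub (catPrefix x y N).length
      exact absurd (hbound j) (by omega)
    obtain ⟨j0, hj0N, hj0ne⟩ : ∃ j, N ≤ j ∧ y j ≠ [] := by
      by_contra hc
      push_neg at hc
      -- same argument: lengths bounded
      have hbound : ∀ j, (catPrefix x y j).length ≤ (catPrefix x y N).length := by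
        intro j
        rcases le_total j N with h | h
        · exact (catPrefix_prefix x y h).length_le
        · obtain ⟨k, rfl⟩ := Nat.exists_eq_add_of_le h
          induction k with
          | zero => simp
          | succ n ih =>
            have he : y (N + n) = [] := hc _ (by omega)
            have : catPrefix x y (N + (n+1)) = catPrefix x y (N + n) := by
              rw [show N + (n+1) = (N + n) + 1 from rfl, catPrefix_succ, he, List.append_nil]
            rw [this]
            exact ih (by omega)
      obtain ⟨j, hj⟩ := hub (catPrefix x y N).length
      exact absurd (hbound j) (by omega)
    refine ⟨catPrefix x y N, cat_mem_mul hx hy N, maskOf Γ,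
      ⟨Γ, hΓne, rfl, ?_⟩, ?_⟩
    · intro a ha
      obtain ⟨j, hjN, hja⟩ := ha N
      exact ⟨y j, hy j, fun b hb => hblock j hjN b hb, hja⟩
    · funext a
      by_cases ha : a ∈ Γ
      · have : parikhInf w a = ⊤ := by
          apply Set.Infinite.encard_eq
          apply Set.infinite_of_forall_exists_gt
          intro n
          obtain ⟨j₁, hj₁⟩ := hub n
          obtain ⟨j, hjj₁, hja⟩ := ha j₁
          obtain ⟨i, hi, hwi⟩ := exists_pos hget j a hja
          refine ⟨i, hwi, ?_⟩
          have := (catPrefix_prefix x y hjj₁).length_le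
          omega
        rw [this]
        simp [maskAdd, maskOf, parikhFin, ha]
      · have hsub : ∀ i, w i = a → i < (catPrefix x y N).length := by
          intro i hi
          by_contra hc
          obtain ⟨j, hjN, _, hwj⟩ := exists_block hub hget N i (by omega)
          rw [hi] at hwj
          exact ha (hblock j hjN a hwj)
        rw [parikh_eq_count hget N a hsub]
        simp [maskAdd, maskOf, parikhFin, ha]
  · rintro ⟨p, hp, m, ⟨Γ, hΓne, rfl, ht⟩, rfl⟩
    obtain ⟨x, hx, z, hz, rfl⟩ := Language.mem_mul.1 hp
    obtain ⟨L, rfl, hL⟩ := Language.mem_kstar.1 hz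
    choose t htT htΓ hta using ht
    obtain ⟨a₀, ha₀⟩ := hΓne
    set g : List A := (Γ.toFinite.toFinset).toList with hgdef
    have hgmem : ∀ b, b ∈ g ↔ b ∈ Γ := by
      intro b
      rw [hgdef, Finset.mem_toList, Set.Finite.mem_toFinset]
    have hgpos : 0 < g.length := by
      rcases g.eq_nil_or_concat with h | ⟨l, c, h⟩
      · exfalso; exact (by rw [h] at hgmem; simpa using (hgmem a₀).2 ha₀)
      · rw [h]; simp
    let c : ℕ → A := fun q => g.get ⟨q % g.length, Nat.mod_lt _ hgpos⟩
    have hc : ∀ q, c q ∈ Γ := fun q => (hgmem _).1 (List.get_mem _ _)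
    let b : ℕ → List A := fun j =>
      if h : j < L.length then L.get ⟨j, h⟩ else t (c (j - L.length)) (hc _)
    have hbT : ∀ j, b j ∈ T := by
      intro j
      by_cases h : j < L.length
      · simp only [b, dif_pos h]; exact hL _ (List.get_mem _ _)
      · simp only [b, dif_neg h]; exact htT _ _
    have hbΓ : ∀ j, L.length ≤ j → ∀ e ∈ b j, e ∈ Γ := by
      intro j hj e he
      simp only [b, dif_neg (not_lt.2 hj)] at he
      exact htΓ _ _ e he
    have hbmem : ∀ j, L.length ≤ j → c (j - L.length) ∈ b j := by
      intro j hj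
      simp only [b, dif_neg (not_lt.2 hj)]
      exact hta _ _
    have hlen : ∀ k, k ≤ (catPrefix x b (L.length + k)).length := by
      intro k
      induction k with
      | zero => omega
      | succ n ih =>
        have hne : b (L.length + n) ≠ [] :=
          List.ne_nil_of_mem (hbmem _ (by omega))
        have h1 : 1 ≤ (b (L.length + n)).length := List.length_pos_iff.2 hne
        have : catPrefix x b (L.length + (n+1)) = catPrefix x b (L.length + n) ++ b (L.length + n) := by
          rw [show L.length + (n+1) = (L.length + n) + 1 from rfl, catPrefix_succ]
        rw [this, List.length_append]
        omega
    set w : ℕ → A := fun i => (catPrefix x b (L.length + i + 1)).getD i a₀ with hwdef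
    have hwin : ∀ i, i < (catPrefix x b (L.length + i + 1)).length := by
      intro i
      have h := hlen (i + 1)
      rw [show L.length + (i+1) = L.length + i + 1 from rfl] at h
      omega
    have hweq : ∀ i, w i = (catPrefix x b (L.length + i + 1))[i]'(hwin i) := by
      intro i
      rw [hwdef]
      exact List.getD_eq_getElem _ _ (hwin i)
    have hwget : ∀ j i (h : i < (catPrefix x b j).length), (catPrefix x b j).get ⟨i, h⟩ = w i := by
      intro j i h
      rw [hweq i, List.get_eq_getElem]
      rcases le_total j (L.length + i + 1) with hle | hle
      · exact (catPrefix_prefix x b hle).getElem h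
      · exact ((catPrefix_prefix x b hle).getElem (hwin i)).symm
    have hub : ∀ n, ∃ j, n < (catPrefix x b j).length :=
      fun n => ⟨L.length + n + 1, hwin n⟩
    have hcatL : ∀ j, j ≤ L.length → catPrefix x b j = x ++ (L.take j).flatten := by
      intro j
      induction j with
      | zero => intro _; simp [catPrefix]
      | succ n ih =>
        intro hn
        rw [catPrefix_succ, ih (by omega)]
        have hb : b n = L.get ⟨n, by omega⟩ := by
          simp only [b, dif_pos (show n < L.length by omega)]
        rw [hb, List.append_assoc]
        congr 1
        rw [← List.take_concat_get (l := L) (i := n) (by omega), List.concat_eq_append,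
          List.flatten_append]
        simp
    refine ⟨w, ⟨x, b, hx, hbT, hub, hwget⟩, ?_⟩
    funext a
    by_cases ha : a ∈ Γ
    · have hLHS : parikhInf w a = ⊤ := by
        apply Set.Infinite.encard_eq
        apply Set.infinite_of_forall_exists_gt
        intro n
        obtain ⟨⟨q₀, hq₀⟩, hq₀a⟩ := List.mem_iff_get.1 ((hgmem a).2 ha)
        set k : ℕ := q₀ + (n+1) * g.length with hkdef
        set j : ℕ := L.length + k with hjdef
        have hcj : c (j - L.length) = a := by
          have : j - L.length = k := by omega
          rw [this]
          simp only [c, hkdef]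
          have hmod : (q₀ + (n+1) * g.length) % g.length = q₀ := by
            rw [Nat.add_mul_mod_self_right]
            exact Nat.mod_eq_of_lt hq₀
          simp_rw [hmod]
          exact hq₀a
        have hmemj : a ∈ b j := by
          have := hbmem j (by omega)
          rwa [hcj] at this
        obtain ⟨i, hi, hwi⟩ := exists_pos hwget j a hmemj
        refine ⟨i, hwi, ?_⟩
        have := hlen k
        have : k ≤ (catPrefix x b j).length := by rw [hjdef]; exact hlen k
        have hk : n < k := by
          have : g.length ≥ 1 := hgpos
          calc n < (n+1) * 1 := by omega
          _ ≤ (n+1) * g.length := by exact Nat.mul_le_mul_left _ this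
          _ ≤ k := by omega
        omega
      rw [hLHS]
      simp [maskAdd, maskOf, parikhFin, ha]
    · have hsub : ∀ i, w i = a → i < (catPrefix x b L.length).length := by
        intro i hi
        by_contra hcon
        obtain ⟨j, hjL, _, hwj⟩ := exists_block hub hwget L.length i (by omega)
        rw [hi] at hwj
        exact ha (hbΓ j hjL a hwj)
      rw [parikh_eq_count hwget L.length a hsub, hcatL L.length le_rfl]
      simp [maskAdd, maskOf, parikhFin, ha]
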